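/- Suppose β > 0, ε > 0, and Q₁, Q₂ : S×A → ℝ satisfy L₁(Q₁) ≤ ε and L₂(Q₂) ≤ ε, where L₁, L₂ are the SGT2 expected loss functions. Then both ‖Q₁ − Q*‖∞ and ‖Q₂ − Q*‖∞ are at most √(ε·|S|·|A|)/(1−γ) + (γ/(1−γ))·√(2ε·|S|·|A|/β). -/
import Mathlib


open Finset

/-- Maximum of `Q s' a'` over actions `a'`. -/
noncomputable def maxQ {S A : Type*} [Fintype A] [Nonempty A]
    (Q : S → A → ℝ) (s' : S) : ℝ :=
  univ.sup' univ_nonempty (fun a' => Q s' a')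

/-- The Bellman optimality operator. -/
noncomputable def bellmanT {S A : Type*} [Fintype S] [Fintype A] [Nonempty A]
    (P r : S → A → S → ℝ) (γ : ℝ) (Q : S → A → ℝ) : S → A → ℝ :=
  fun s a => ∑ s', P s a s' * (r s a s' + γ * maxQ Q s')

/-- Sup norm on `ℝ^{S×A}`. -/
noncomputable def supNorm {S A : Type*} [Fintype S] [Fintype A] [Nonempty S] [Nonempty A]
    (Q : S → A → ℝ) : ℝ :=
  univ.sup' univ_nonempty (fun p : S × A => |Q p.1 p.2|)

/-- SGT2 expected loss `L₁`. -/
noncomputable def sgt2L1 {S A : Type*} [Fintype S] [Fintype A] [Nonempty A]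
    (P r : S → A → S → ℝ) (γ β : ℝ) (Q₁ Q₂ : S → A → ℝ) : ℝ :=
  (1 / ((Fintype.card S : ℝ) * (Fintype.card A : ℝ))) *
    ∑ p : S × A,
      ((∑ s', P p.1 p.2 s' * (r p.1 p.2 s' + γ * maxQ Q₂ s' - Q₁ p.1 p.2) ^ 2) +
        (β / 2) * (Q₂ p.1 p.2 - Q₁ p.1 p.2) ^ 2)

/-- SGT2 expected loss `L₂`. -/
noncomputable def sgt2L2 {S A : Type*} [Fintype S] [Fintype A] [Nonempty A]
    (P r : S → A → S → ℝ) (γ β : ℝ) (Q₁ Q₂ : S → A → ℝ) : ℝ :=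
  (1 / ((Fintype.card S : ℝ) * (Fintype.card A : ℝ))) *
    ∑ p : S × A,
      ((∑ s', P p.1 p.2 s' * (r p.1 p.2 s' + γ * maxQ Q₁ s' - Q₂ p.1 p.2) ^ 2) +
        (β / 2) * (Q₁ p.1 p.2 - Q₂ p.1 p.2) ^ 2)

section Aux

variable {S A : Type*} [Fintype S] [Fintype A] [Nonempty S] [Nonempty A]

lemma abs_le_supNorm' (Q : S → A → ℝ) (s : S) (a : A) : |Q s a| ≤ supNorm Q :=
  Finset.le_sup' (fun p : S × A => |Q p.1 p.2|) (mem_univ (s, a))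

lemma supNorm_le' {Q : S → A → ℝ} {c : ℝ} (h : ∀ s a, |Q s a| ≤ c) : supNorm Q ≤ c :=
  Finset.sup'_le _ _ fun p _ => h p.1 p.2

lemma maxQ_abs_sub (Q Q' : S → A → ℝ) (s' : S) :
    |maxQ Q s' - maxQ Q' s'| ≤ supNorm (fun s a => Q s a - Q' s a) := by
  set c := supNorm (fun s a => Q s a - Q' s a) with hc
  rw [abs_sub_le_iff]
  constructor
  · rw [sub_le_iff_le_add]
    apply Finset.sup'_le
    intro a' _
    have h1 := abs_le_supNorm' (fun s a => Q s a - Q' s a) s' a'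
    have h2 : Q' s' a' ≤ maxQ Q' s' := Finset.le_sup' _ (mem_univ a')
    have : Q s' a' - Q' s' a' ≤ c := le_trans (le_abs_self _) h1
    linarith
  · rw [sub_le_iff_le_add]
    apply Finset.sup'_le
    intro a' _
    have h1 := abs_le_supNorm' (fun s a => Q s a - Q' s a) s' a'
    have h2 : Q s' a' ≤ maxQ Q s' := Finset.le_sup' _ (mem_univ a')
    have : -(Q s' a' - Q' s' a') ≤ c := le_trans (neg_le_abs _) h1
    linarith

lemma bellman_contract (P r : S → A → S → ℝ) (γ : ℝ) (hγ0 : 0 ≤ γ)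
    (hP0 : ∀ s a s', 0 ≤ P s a s') (hP1 : ∀ s a, ∑ s', P s a s' = 1)
    (Q Q' : S → A → ℝ) (s : S) (a : A) :
    |bellmanT P r γ Q s a - bellmanT P r γ Q' s a| ≤
      γ * supNorm (fun s a => Q s a - Q' s a) := by
  set c := supNorm (fun s a => Q s a - Q' s a) with hc
  have hrepr : bellmanT P r γ Q s a - bellmanT P r γ Q' s a
      = ∑ s', P s a s' * (γ * (maxQ Q s' - maxQ Q' s')) := by
    rw [bellmanT, bellmanT, ← Finset.sum_sub_distrib]
    exact Finset.sum_congr rfl fun s' _ => by ring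
  rw [hrepr]
  calc |∑ s', P s a s' * (γ * (maxQ Q s' - maxQ Q' s'))|
      ≤ ∑ s', |P s a s' * (γ * (maxQ Q s' - maxQ Q' s'))| :=
        Finset.abs_sum_le_sum_abs _ _
    _ ≤ ∑ s', P s a s' * (γ * c) := by
        apply Finset.sum_le_sum
        intro s' _
        rw [abs_mul, abs_mul, abs_of_nonneg (hP0 s a s'), abs_of_nonneg hγ0]
        have hd := maxQ_abs_sub Q Q' s'
        rw [← hc] at hd
        exact mul_le_mul_of_nonneg_left (mul_le_mul_of_nonneg_left hd hγ0) (hP0 s a s')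
    _ = γ * c := by rw [← Finset.sum_mul, hP1, one_mul]

lemma loss_bound (P r : S → A → S → ℝ) (γ β ε : ℝ) (hβ : 0 < β)
    (hP0 : ∀ s a s', 0 ≤ P s a s') (hP1 : ∀ s a, ∑ s', P s a s' = 1)
    (Qa Qb : S → A → ℝ) (hL : sgt2L1 P r γ β Qa Qb ≤ ε) :
    (∀ s a, |bellmanT P r γ Qb s a - Qa s a| ≤
        Real.sqrt (ε * ((Fintype.card S : ℝ) * (Fintype.card A : ℝ)))) ∧
    (∀ s a, |Qb s a - Qa s a| ≤
        Real.sqrt (2 * ε * ((Fintype.card S : ℝ) * (Fintype.card A : ℝ)) / β)) := by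
  set N := (Fintype.card S : ℝ) * (Fintype.card A : ℝ) with hNdef
  have hS : (0:ℝ) < Fintype.card S := by exact_mod_cast Fintype.card_pos
  have hA : (0:ℝ) < Fintype.card A := by exact_mod_cast Fintype.card_pos
  have hN : 0 < N := mul_pos hS hA
  set F : S × A → ℝ := fun p =>
    (∑ s', P p.1 p.2 s' * (r p.1 p.2 s' + γ * maxQ Qb s' - Qa p.1 p.2) ^ 2) +
      (β / 2) * (Qb p.1 p.2 - Qa p.1 p.2) ^ 2 with hF
  have hFnn : ∀ p : S × A, 0 ≤ F p := by
    intro p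
    apply add_nonneg
    · exact Finset.sum_nonneg fun s' _ => mul_nonneg (hP0 _ _ _) (sq_nonneg _)
    · positivity
  have hsum : ∑ p : S × A, F p ≤ ε * N := by
    have h := hL
    rw [sgt2L1, one_div, inv_mul_le_iff₀ hN] at h
    calc ∑ p : S × A, F p ≤ N * ε := h
      _ = ε * N := mul_comm _ _
  have hterm : ∀ p : S × A, F p ≤ ε * N := fun p =>
    le_trans (Finset.single_le_sum (fun q _ => hFnn q) (mem_univ p)) hsum
  constructor
  · intro s a
    have h1 : ∑ s', P s a s' * (r s a s' + γ * maxQ Qb s' - Qa s a) ^ 2 ≤ ε * N := by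
      have := hterm (s, a)
      have hnn : 0 ≤ (β / 2) * (Qb s a - Qa s a) ^ 2 := by positivity
      simp only [hF] at this
      linarith
    have key : (∑ s', P s a s' * (r s a s' + γ * maxQ Qb s' - Qa s a)) ^ 2 ≤
        ∑ s', P s a s' * (r s a s' + γ * maxQ Qb s' - Qa s a) ^ 2 := by
      set x : S → ℝ := fun s' => r s a s' + γ * maxQ Qb s' - Qa s a with hx
      calc (∑ s', P s a s' * x s') ^ 2
          = (∑ s', Real.sqrt (P s a s') * (Real.sqrt (P s a s') * x s')) ^ 2 := by
            congr 1
            exact Finset.sum_congr rfl fun s' _ => by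
              rw [← mul_assoc, Real.mul_self_sqrt (hP0 s a s')]
        _ ≤ (∑ s', Real.sqrt (P s a s') ^ 2) * (∑ s', (Real.sqrt (P s a s') * x s') ^ 2) :=
            Finset.sum_mul_sq_le_sq_mul_sq _ _ _
        _ = (∑ s', P s a s') * (∑ s', P s a s' * x s' ^ 2) := by
            congr 1
            · exact Finset.sum_congr rfl fun s' _ => Real.sq_sqrt (hP0 s a s')
            · exact Finset.sum_congr rfl fun s' _ => by
                rw [mul_pow, Real.sq_sqrt (hP0 s a s')]
        _ = ∑ s', P s a s' * x s' ^ 2 := by rw [hP1, one_mul]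
    have hrepr : bellmanT P r γ Qb s a - Qa s a
        = ∑ s', P s a s' * (r s a s' + γ * maxQ Qb s' - Qa s a) := by
      calc bellmanT P r γ Qb s a - Qa s a
          = (∑ s', P s a s' * (r s a s' + γ * maxQ Qb s')) - (∑ s', P s a s') * Qa s a := by
            rw [hP1, one_mul]; rfl
        _ = ∑ s', (P s a s' * (r s a s' + γ * maxQ Qb s') - P s a s' * Qa s a) := by
            rw [Finset.sum_mul, Finset.sum_sub_distrib]
        _ = ∑ s', P s a s' * (r s a s' + γ * maxQ Qb s' - Qa s a) :=
            Finset.sum_congr rfl fun s' _ => by ring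
    have hsq : (bellmanT P r γ Qb s a - Qa s a) ^ 2 ≤ ε * N := by
      rw [hrepr]; exact key.trans h1
    calc |bellmanT P r γ Qb s a - Qa s a|
        = Real.sqrt ((bellmanT P r γ Qb s a - Qa s a) ^ 2) := (Real.sqrt_sq_eq_abs _).symm
      _ ≤ Real.sqrt (ε * N) := Real.sqrt_le_sqrt hsq
  · intro s a
    have h2 : (β / 2) * (Qb s a - Qa s a) ^ 2 ≤ ε * N := by
      have := hterm (s, a)
      have hnn : 0 ≤ ∑ s', P s a s' * (r s a s' + γ * maxQ Qb s' - Qa s a) ^ 2 :=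
        Finset.sum_nonneg fun s' _ => mul_nonneg (hP0 _ _ _) (sq_nonneg _)
      simp only [hF] at this
      linarith
    have hsq : (Qb s a - Qa s a) ^ 2 ≤ 2 * ε * N / β := by
      rw [le_div_iff₀ hβ]; nlinarith
    calc |Qb s a - Qa s a| = Real.sqrt ((Qb s a - Qa s a) ^ 2) := (Real.sqrt_sq_eq_abs _).symm
      _ ≤ Real.sqrt (2 * ε * N / β) := Real.sqrt_le_sqrt hsq

end Aux

theorem sgt2_dqn_optimality {S A : Type*} [Fintype S] [Fintype A] [Nonempty S] [Nonempty A]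
    (P r : S → A → S → ℝ) (γ : ℝ) (hγ0 : 0 ≤ γ) (hγ1 : γ < 1)
    (hP0 : ∀ s a s', 0 ≤ P s a s') (hP1 : ∀ s a, ∑ s', P s a s' = 1)
    (Qstar : S → A → ℝ) (hQstar : bellmanT P r γ Qstar = Qstar)
    (β ε : ℝ) (hβ : 0 < β) (hε : 0 < ε)
    (Q₁ Q₂ : S → A → ℝ)
    (hL1 : sgt2L1 P r γ β Q₁ Q₂ ≤ ε)
    (hL2 : sgt2L2 P r γ β Q₁ Q₂ ≤ ε) :
    supNorm (fun s a => Q₁ s a - Qstar s a) ≤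
      Real.sqrt (ε * (Fintype.card S : ℝ) * (Fintype.card A : ℝ)) / (1 - γ) +
        γ / (1 - γ) *
          Real.sqrt (2 * ε * (Fintype.card S : ℝ) * (Fintype.card A : ℝ) / β) ∧
    supNorm (fun s a => Q₂ s a - Qstar s a) ≤
      Real.sqrt (ε * (Fintype.card S : ℝ) * (Fintype.card A : ℝ)) / (1 - γ) +
        γ / (1 - γ) *
          Real.sqrt (2 * ε * (Fintype.card S : ℝ) * (Fintype.card A : ℝ) / β) := by
  have hγ : (0:ℝ) < 1 - γ := by linarith
  set N := (Fintype.card S : ℝ) * (Fintype.card A : ℝ) with hNdef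
  set a0 := Real.sqrt (ε * N) with ha0
  set b0 := Real.sqrt (2 * ε * N / β) with hb0
  have ha0nn : 0 ≤ a0 := Real.sqrt_nonneg _
  have hb0nn : 0 ≤ b0 := Real.sqrt_nonneg _
  have hL2' : sgt2L1 P r γ β Q₂ Q₁ ≤ ε := hL2
  obtain ⟨hB1, hd1⟩ := loss_bound P r γ β ε hβ hP0 hP1 Q₁ Q₂ hL1
  obtain ⟨hB2, hd2⟩ := loss_bound P r γ β ε hβ hP0 hP1 Q₂ Q₁ hL2'
  -- supNorm of Q₂ - Q₁ and Q₁ - Q₂ bounded by b0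
  have hs21 : supNorm (fun s a => Q₂ s a - Q₁ s a) ≤ b0 := supNorm_le' hd1
  have hs12 : supNorm (fun s a => Q₁ s a - Q₂ s a) ≤ b0 := supNorm_le' hd2
  -- main fixed point bounds
  have key : ∀ (Qx Qy : S → A → ℝ),
      (∀ s a, |bellmanT P r γ Qy s a - Qx s a| ≤ a0) →
      supNorm (fun s a => Qy s a - Qx s a) ≤ b0 →
      supNorm (fun s a => Qx s a - Qstar s a) ≤ a0 / (1 - γ) + γ / (1 - γ) * b0 := by
    intro Qx Qy hB hs
    set D := supNorm (fun s a => Qx s a - Qstar s a) with hD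
    have hDle : D ≤ a0 + γ * b0 + γ * D := by
      apply supNorm_le'
      intro s a
      have h1 := hB s a
      have h2 := bellman_contract P r γ hγ0 hP0 hP1 Qy Qx s a
      have h3 := bellman_contract P r γ hγ0 hP0 hP1 Qx Qstar s a
      rw [hQstar] at h3
      have htri : |Qx s a - Qstar s a| ≤
          |bellmanT P r γ Qy s a - Qx s a| + |bellmanT P r γ Qy s a - bellmanT P r γ Qx s a|
            + |bellmanT P r γ Qx s a - Qstar s a| := by
        have := abs_sub_abs_le_abs_sub (Qx s a) (Qstar s a)
        calc |Qx s a - Qstar s a|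
            = |(-(bellmanT P r γ Qy s a - Qx s a)) + (bellmanT P r γ Qy s a - bellmanT P r γ Qx s a)
                + (bellmanT P r γ Qx s a - Qstar s a)| := by ring_nf
          _ ≤ _ := by
              calc _ ≤ |(-(bellmanT P r γ Qy s a - Qx s a)) + (bellmanT P r γ Qy s a - bellmanT P r γ Qx s a)|
                    + |bellmanT P r γ Qx s a - Qstar s a| := abs_add_le _ _
                _ ≤ _ := by
                    have := abs_add_le (-(bellmanT P r γ Qy s a - Qx s a)) (bellmanT P r γ Qy s a - bellmanT P r γ Qx s a)
                    rw [abs_neg] at this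
                    linarith
      have hγb : γ * supNorm (fun s a => Qy s a - Qx s a) ≤ γ * b0 :=
        mul_le_mul_of_nonneg_left hs hγ0
      have hγD : γ * supNorm (fun s a => Qx s a - Qstar s a) ≤ γ * D := le_of_eq rfl
      linarith
    have hD1γ : D * (1 - γ) ≤ a0 + γ * b0 := by nlinarith
    have : D ≤ (a0 + γ * b0) / (1 - γ) := by
      rw [le_div_iff₀ hγ]; linarith
    calc D ≤ (a0 + γ * b0) / (1 - γ) := this
      _ = a0 / (1 - γ) + γ / (1 - γ) * b0 := by field_simp
  have r1 := key Q₁ Q₂ hB1 hs21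
  have r2 := key Q₂ Q₁ hB2 hs12
  have hae : Real.sqrt (ε * (Fintype.card S : ℝ) * (Fintype.card A : ℝ)) = a0 := by
    rw [ha0, hNdef, mul_assoc]
  have hbe : Real.sqrt (2 * ε * (Fintype.card S : ℝ) * (Fintype.card A : ℝ) / β) = b0 := by
    rw [hb0, hNdef]; ring_nf
  rw [hae, hbe]
  exact ⟨r1, r2⟩
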